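/- The Shapley value formula ∑_{S ⊆ N \ {l}} (|S|!·(M−|S|−1)!/M!)·[v(S ∪ {l}) − v(S)] satisfies the efficiency axiom: the sum over all players l of their Shapley values equals v(N) − v(∅), where N is the full player set of size M. -/

import Mathlib

/-- The Shapley value of player `l` for the characteristic function
`v : Finset N → ℝ`:
`φ_l = ∑_{S ⊆ N \ {l}} (|S|! (M − |S| − 1)! / M!) · (v(S ∪ {l}) − v(S))`,
where `M` is the total number of players. -/
noncomputable def shapley {N : Type*} [Fintype N] [DecidableEq N]
    (v : Finset N → ℝ) (l : N) : ℝ :=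
  ∑ S ∈ ((Finset.univ : Finset N).erase l).powerset,
    ((S.card.factorial * (Fintype.card N - S.card - 1).factorial : ℕ) : ℝ) /
        ((Fintype.card N).factorial : ℕ) * (v (insert l S) - v S)

open Finset

private lemma coeff_aux (M k : ℕ) (hkM : k ≤ M) :
    (k : ℝ) * (((k - 1).factorial * (M - (k - 1) - 1).factorial : ℕ) / (M.factorial : ℕ))
      - ((M - k : ℕ) : ℝ) * ((k.factorial * (M - k - 1).factorial : ℕ) / (M.factorial : ℕ))
    = (if k = M then 1 else 0) - (if k = 0 then 1 else 0) := by
  have hMfac : (M.factorial : ℝ) ≠ 0 := Nat.cast_ne_zero.mpr M.factorial_ne_zero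
  rcases Nat.eq_zero_or_pos k with h0 | h0
  · subst h0
    rcases Nat.eq_zero_or_pos M with hM0 | hM0
    · subst hM0; norm_num
    · have hMne : M ≠ 0 := hM0.ne'
      have natEq : (M - 0) * (Nat.factorial 0 * (M - 0 - 1).factorial) = M.factorial := by
        rw [Nat.sub_zero, Nat.factorial_zero, one_mul, Nat.mul_factorial_pred hM0.ne']
      rw [if_neg (Ne.symm hMne), if_pos rfl]
      rw [Nat.cast_zero, zero_mul, mul_div_assoc']
      rw [show ((M - 0 : ℕ) : ℝ) * ((Nat.factorial 0 * (M - 0 - 1).factorial : ℕ) : ℝ)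
          = (M.factorial : ℝ) by exact_mod_cast congrArg (Nat.cast (R := ℝ)) natEq]
      rw [div_self hMfac]
  · have hkne : k ≠ 0 := h0.ne'
    have e1 : M - (k - 1) - 1 = M - k := by omega
    rw [e1]
    rcases eq_or_lt_of_le hkM with hkM' | hkM'
    · subst hkM'
      have natEq : k * ((k - 1).factorial * (k - k).factorial) = k.factorial := by
        rw [Nat.sub_self, Nat.factorial_zero, mul_one, Nat.mul_factorial_pred h0.ne']
      rw [if_pos rfl, if_neg hkne, show ((k - k : ℕ) : ℝ) = 0 by simp, zero_mul,
        mul_div_assoc']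
      rw [show (k : ℝ) * (((k - 1).factorial * (k - k).factorial : ℕ) : ℝ)
          = (k.factorial : ℝ) by exact_mod_cast congrArg (Nat.cast (R := ℝ)) natEq]
      rw [div_self hMfac]
    · have hMk : 0 < M - k := by omega
      have natEq : k * ((k - 1).factorial * (M - k).factorial)
          = (M - k) * (k.factorial * (M - k - 1).factorial) := by
        calc k * ((k - 1).factorial * (M - k).factorial)
            = (k * (k - 1).factorial) * (M - k).factorial := by ring
          _ = k.factorial * (M - k).factorial := by rw [Nat.mul_factorial_pred h0.ne']
          _ = k.factorial * ((M - k) * (M - k - 1).factorial) := by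
              rw [Nat.mul_factorial_pred hMk.ne']
          _ = (M - k) * (k.factorial * (M - k - 1).factorial) := by ring
      rw [if_neg hkne, if_neg (Nat.ne_of_lt hkM'), mul_div_assoc', mul_div_assoc']
      rw [show (k : ℝ) * (((k - 1).factorial * (M - k).factorial : ℕ) : ℝ)
          = ((M - k : ℕ) : ℝ) * ((k.factorial * (M - k - 1).factorial : ℕ) : ℝ) by
          exact_mod_cast congrArg (Nat.cast (R := ℝ)) natEq]
      rw [sub_self, sub_self]

/-- Efficiency axiom: the Shapley values of all players sum to
`v(N) − v(∅)`. -/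
theorem shapley_efficiency {N : Type*} [Fintype N] [DecidableEq N]
    (v : Finset N → ℝ) :
    ∑ l : N, shapley v l = v Finset.univ - v ∅ := by
  classical
  set M := Fintype.card N with hM
  set w : ℕ → ℝ := fun k =>
    ((k.factorial * (M - k - 1).factorial : ℕ) : ℝ) / (M.factorial : ℕ) with hw
  have hpow : ∀ l : N, ((Finset.univ : Finset N).erase l).powerset
      = Finset.univ.powerset.filter (fun S => l ∉ S) := by
    intro l; ext S
    simp [Finset.subset_erase]
  have step1 : ∀ l : N, shapley v l
      = (∑ T ∈ Finset.univ.powerset.filter (fun T : Finset N => l ∈ T),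
          w (T.card - 1) * v T)
      - (∑ S ∈ Finset.univ.powerset.filter (fun S : Finset N => l ∉ S),
          w S.card * v S) := by
    intro l
    unfold shapley
    rw [hpow l]
    have reindex : (∑ S ∈ Finset.univ.powerset.filter (fun S : Finset N => l ∉ S),
          w S.card * v (insert l S))
        = ∑ T ∈ Finset.univ.powerset.filter (fun T : Finset N => l ∈ T),
          w (T.card - 1) * v T := by
      refine Finset.sum_bij' (fun S _ => insert l S) (fun T _ => T.erase l)
        ?_ ?_ ?_ ?_ ?_
      · intro S hS
        simp only [Finset.mem_filter, Finset.mem_powerset] at hS ⊢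
        exact ⟨Finset.subset_univ _, Finset.mem_insert_self l S⟩
      · intro T hT
        simp only [Finset.mem_filter, Finset.mem_powerset] at hT ⊢
        exact ⟨Finset.subset_univ _, Finset.notMem_erase l T⟩
      · intro S hS
        simp only [Finset.mem_filter, Finset.mem_powerset] at hS
        exact Finset.erase_insert hS.2
      · intro T hT
        simp only [Finset.mem_filter, Finset.mem_powerset] at hT
        exact Finset.insert_erase hT.2
      · intro S hS
        simp only [Finset.mem_filter, Finset.mem_powerset] at hS
        rw [Finset.card_insert_of_notMem hS.2]
        simp
    calc ∑ S ∈ Finset.univ.powerset.filter (fun S : Finset N => l ∉ S),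
          w S.card * (v (insert l S) - v S)
        = (∑ S ∈ Finset.univ.powerset.filter (fun S : Finset N => l ∉ S),
            w S.card * v (insert l S))
          - ∑ S ∈ Finset.univ.powerset.filter (fun S : Finset N => l ∉ S),
            w S.card * v S := by
          rw [← Finset.sum_sub_distrib]
          exact Finset.sum_congr rfl fun S _ => by ring
      _ = _ := by rw [reindex]
  rw [Finset.sum_congr rfl fun l _ => step1 l, Finset.sum_sub_distrib]
  have swap1 : (∑ l : N, ∑ T ∈ Finset.univ.powerset.filter (fun T : Finset N => l ∈ T),
        w (T.card - 1) * v T)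
      = ∑ T ∈ (Finset.univ : Finset N).powerset,
        (T.card : ℝ) * (w (T.card - 1) * v T) := by
    simp only [Finset.sum_filter]
    rw [Finset.sum_comm]
    refine Finset.sum_congr rfl fun T _ => ?_
    rw [Finset.sum_ite_mem, Finset.univ_inter, Finset.sum_const, nsmul_eq_mul]
  have swap2 : (∑ l : N, ∑ S ∈ Finset.univ.powerset.filter (fun S : Finset N => l ∉ S),
        w S.card * v S)
      = ∑ S ∈ (Finset.univ : Finset N).powerset,
        ((M - S.card : ℕ) : ℝ) * (w S.card * v S) := by
    simp only [Finset.sum_filter]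
    rw [Finset.sum_comm]
    refine Finset.sum_congr rfl fun S _ => ?_
    have : ∀ l : N, (if l ∉ S then w S.card * v S else 0)
        = (if l ∈ Sᶜ then w S.card * v S else 0) := by
      intro l; simp [Finset.mem_compl]
    rw [Finset.sum_congr rfl fun l _ => this l, Finset.sum_ite_mem, Finset.univ_inter,
      Finset.sum_const, nsmul_eq_mul, Finset.card_compl]
  rw [swap1, swap2, ← Finset.sum_sub_distrib]
  have key : ∀ T ∈ (Finset.univ : Finset N).powerset,
      (T.card : ℝ) * (w (T.card - 1) * v T) - ((M - T.card : ℕ) : ℝ) * (w T.card * v T)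
      = (if T = Finset.univ then 1 else 0) * v T - (if T = ∅ then 1 else 0) * v T := by
    intro T hT
    have hcard : T.card ≤ M := by
      rw [hM]; exact Finset.card_le_univ T
    have hc := coeff_aux M T.card hcard
    have h1 : (T = Finset.univ) ↔ (T.card = M) := by
      constructor
      · rintro rfl; rfl
      · intro h; exact Finset.eq_univ_of_card T h
    have h2 : (T = ∅) ↔ (T.card = 0) := by simp [Finset.card_eq_zero]
    rw [hw]
    simp only [h1, h2]
    have : (T.card : ℝ) * (((T.card - 1).factorial * (M - (T.card - 1) - 1).factorial : ℕ)
          / (M.factorial : ℕ)) * v T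
        - ((M - T.card : ℕ) : ℝ) * ((T.card.factorial * (M - T.card - 1).factorial : ℕ)
          / (M.factorial : ℕ)) * v T
        = ((if T.card = M then 1 else 0) - (if T.card = 0 then 1 else 0)) * v T := by
      rw [← sub_mul, hc]
    rw [sub_mul] at this
    calc _ = (T.card : ℝ) * (((T.card - 1).factorial * (M - (T.card - 1) - 1).factorial : ℕ)
          / (M.factorial : ℕ)) * v T
        - ((M - T.card : ℕ) : ℝ) * ((T.card.factorial * (M - T.card - 1).factorial : ℕ)
          / (M.factorial : ℕ)) * v T := by ring
      _ = _ := this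
  rw [Finset.sum_congr rfl key, Finset.sum_sub_distrib]
  have e1 : (∑ T ∈ (Finset.univ : Finset N).powerset,
      (if T = Finset.univ then 1 else 0) * v T) = v Finset.univ := by
    simp only [ite_mul, one_mul, zero_mul]
    rw [Finset.sum_ite_eq' Finset.univ.powerset Finset.univ v]
    simp [Finset.mem_powerset]
  have e2 : (∑ T ∈ (Finset.univ : Finset N).powerset,
      (if T = ∅ then 1 else 0) * v T) = v ∅ := by
    simp only [ite_mul, one_mul, zero_mul]
    rw [Finset.sum_ite_eq' Finset.univ.powerset ∅ v]
    simp [Finset.mem_powerset]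
  rw [e1, e2]
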